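/- Suppose each approximate backward flow B̄_{h,k} is a bijection of ℝ^d with inverse F̄_{h,k}, define T̄_h φ⁰_{h,k}(x) := φ⁰_{h,k}(B̄_{h,k}(x)) and Σ_{h,k} := F̄(Σ⁰_{h,k}) ∪ F̄_{h,k}(Σ⁰_{h,k}), and assume there is Λ > 0 such that B̄ is Λ-Lipschitz on ℝ^d and each B̄_{h,k} is Λ-Lipschitz on Σ_{h,k} (with respect to ‖·‖_∞). Then, with e_F(h) := sup_{k∈ℤ^d} sup_{x̂∈Σ⁰_{h,k}} ‖F̄_{h,k}(x̂) − F̄(x̂)‖_∞, there exists a constant C depending only on c_w, L_φ, ρ⁰ and d such that ‖(T̄_h − T̄_ex) f⁰_h‖_{L^∞(ℝ^d)} ≤ C (1 + Λ e_F(h)/h)^d · (Λ e_F(h)/h) · ‖f⁰‖_{L^∞}. -/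

import Mathlib

open scoped NNReal
open Set

/-- Grid node `x⁰_k := h k`. -/
noncomputable def node (d : ℕ) (h : ℝ) (k : Fin d → ℤ) : Fin d → ℝ :=
  fun i => h * (k i : ℝ)

/-- Particle shape function `φ⁰_{h,k}(x) := h^{-d} φ(h⁻¹ x - k)`. -/
noncomputable def part (d : ℕ) (h : ℝ) (φ : (Fin d → ℝ) → ℝ)
    (k : Fin d → ℤ) (x : Fin d → ℝ) : ℝ :=
  (h ^ d)⁻¹ * φ (fun i => x i / h - (k i : ℝ))

/-- under the uniform `Λ`-Lipschitz assumptions on the exact and approximate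
backward flows, the transport error is controlled by the forward flow error `e_F(h)`:
`‖(T̄_h − T̄_ex) f⁰_h‖_∞ ≤ C (1 + Λ e_F/h)^d (Λ e_F/h) ‖f⁰‖_∞`, `C = C(c_w, L_φ, ρ⁰, d)`. -/
theorem transport_error_forward_flow
    (d : ℕ) (hd : 1 ≤ d) (cw : ℝ) (hcw : 0 < cw) (Lφ : ℝ≥0)
    (ρ0 : ℝ) (hρ0 : 0 < ρ0) :
    ∃ C : ℝ, 0 < C ∧
      ∀ (h : ℝ), 0 < h →
      ∀ (φ : (Fin d → ℝ) → ℝ), LipschitzWith Lφ φ → (∀ x, φ x ≠ 0 → ‖x‖ ≤ ρ0) →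
      ∀ (f0 : (Fin d → ℝ) → ℝ), BddAbove (Set.range fun x => |f0 x|) →
      ∀ (w : (Fin d → ℤ) → ℝ), (∀ k, |w k| ≤ cw * h ^ d * ⨆ y, |f0 y|) →
      ∀ (F : (Fin d → ℝ) ≃ (Fin d → ℝ))
        (Bh : (Fin d → ℤ) → (Fin d → ℝ) ≃ (Fin d → ℝ))
        (Λ : ℝ≥0), 0 < Λ →
        LipschitzWith Λ (F.symm : (Fin d → ℝ) → (Fin d → ℝ)) →
        (∀ k : Fin d → ℤ,
          LipschitzOnWith Λ (Bh k)
            (F '' Function.support (part d h φ k)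
              ∪ (Bh k).symm '' Function.support (part d h φ k))) →
      ∀ (eF : ℝ), 0 ≤ eF →
        (∀ k : Fin d → ℤ, ∀ y ∈ Function.support (part d h φ k),
          ‖(Bh k).symm y - F y‖ ≤ eF) →
      ∀ x : Fin d → ℝ,
        |(∑' k : Fin d → ℤ, w k * part d h φ k (Bh k x))
            - ∑' k : Fin d → ℤ, w k * part d h φ k (F.symm x)|
          ≤ C * (1 + (Λ : ℝ) * eF / h) ^ d * ((Λ : ℝ) * eF / h) * ⨆ y, |f0 y| := by
  refine ⟨cw * ((Lφ : ℝ) + 1) * (2 * ρ0 + 2) ^ d, by positivity, ?_⟩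
  intro h hh φ hφ hsupp f0 hf0 w hw F Bh Λ hΛ hFlip hBlip eF heF heFb x
  set xh := F.symm x with hxh
  set M := ⨆ y, |f0 y| with hM
  have hM0 : 0 ≤ M := le_trans (abs_nonneg _) (le_ciSup hf0 (fun _ => 0))
  set t := (Λ : ℝ) * eF / h with ht
  have ht0 : 0 ≤ t := by positivity
  set r := ρ0 + t with hr
  have hr0 : 0 ≤ r := by positivity
  -- Key distance bound
  have keyA : ∀ k : Fin d → ℤ,
      (part d h φ k (Bh k x) ≠ 0 ∨ part d h φ k xh ≠ 0) →
      ‖Bh k x - xh‖ ≤ (Λ : ℝ) * eF := by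
    intro k hk
    rcases hk with hk | hk
    · -- Bh k x in the support
      have hmem : Bh k x ∈ Function.support (part d h φ k) := hk
      have h1 : ‖(Bh k).symm (Bh k x) - F (Bh k x)‖ ≤ eF := heFb k _ hmem
      rw [Equiv.symm_apply_apply] at h1
      have h2 := hFlip.dist_le_mul (F (Bh k x)) x
      rw [Equiv.symm_apply_apply] at h2
      calc ‖Bh k x - xh‖ = dist (Bh k x) (F.symm x) := by rw [dist_eq_norm, hxh]
        _ ≤ (Λ : ℝ) * dist (F (Bh k x)) x := h2
        _ ≤ (Λ : ℝ) * eF := by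
            refine mul_le_mul_of_nonneg_left ?_ (Λ.coe_nonneg)
            rw [dist_eq_norm, ← norm_sub_rev]; exact h1
    · -- xh in the support
      have hmem : xh ∈ Function.support (part d h φ k) := hk
      have h1 : ‖(Bh k).symm xh - F xh‖ ≤ eF := heFb k _ hmem
      have ha : F xh ∈ (F '' Function.support (part d h φ k)
          ∪ (Bh k).symm '' Function.support (part d h φ k)) :=
        Or.inl ⟨xh, hmem, rfl⟩
      have hb : (Bh k).symm xh ∈ (F '' Function.support (part d h φ k)
          ∪ (Bh k).symm '' Function.support (part d h φ k)) :=
        Or.inr ⟨xh, hmem, rfl⟩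
      have h2 := (hBlip k).dist_le_mul (F xh) ha ((Bh k).symm xh) hb
      simp only [Equiv.apply_symm_apply] at h2
      have hFx : F xh = x := by rw [hxh, Equiv.apply_symm_apply]
      rw [hFx] at h2 <;> try skip
      calc ‖Bh k x - xh‖ = dist (Bh k x) xh := (dist_eq_norm _ _).symm
        _ ≤ (Λ : ℝ) * dist x ((Bh k).symm xh) := h2
        _ ≤ (Λ : ℝ) * eF := by
            refine mul_le_mul_of_nonneg_left ?_ (Λ.coe_nonneg)
            rw [dist_eq_norm, ← norm_sub_rev, ← hFx]; exact h1
  -- Support localization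
  have hloc : ∀ (k : Fin d → ℤ) (y : Fin d → ℝ), part d h φ k y ≠ 0 →
      ∀ i, |y i / h - (k i : ℝ)| ≤ ρ0 := by
    intro k y hy i
    have hφy : φ (fun i => y i / h - (k i : ℝ)) ≠ 0 := by
      intro h0; apply hy; rw [part, h0, mul_zero]
    have hni := norm_le_pi_norm (fun j => y j / h - (k j : ℝ)) i
    simp only [Real.norm_eq_abs] at hni
    exact le_trans hni (hsupp _ hφy)
  -- membership in the finite index set
  classical
  set S : Finset (Fin d → ℤ) :=
    Fintype.piFinset (fun i => Finset.Icc ⌈xh i / h - r⌉ ⌊xh i / h + r⌋) with hS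
  have hmemS : ∀ k : Fin d → ℤ,
      (part d h φ k (Bh k x) ≠ 0 ∨ part d h φ k xh ≠ 0) → k ∈ S := by
    intro k hk
    have hcoord : ∀ i, |xh i / h - (k i : ℝ)| ≤ r := by
      intro i
      rcases hk with hk' | hk'
      · have hA := keyA k (Or.inl hk')
        have hloc' := hloc k _ hk' i
        have hxi : |xh i - Bh k x i| ≤ (Λ : ℝ) * eF := by
          have hni := norm_le_pi_norm (xh - Bh k x) i
          simp only [Pi.sub_apply, Real.norm_eq_abs] at hni
          refine le_trans hni (le_trans (le_of_eq (norm_sub_rev _ _)) hA)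
        have heq : xh i / h - (k i : ℝ)
            = (xh i - Bh k x i) / h + (Bh k x i / h - (k i : ℝ)) := by ring
        calc |xh i / h - (k i : ℝ)|
            ≤ |(xh i - Bh k x i) / h| + |Bh k x i / h - (k i : ℝ)| := by
              rw [heq]; exact abs_add_le _ _
          _ ≤ t + ρ0 := by
              refine add_le_add ?_ hloc'
              rw [abs_div, abs_of_pos hh, ht, div_le_div_iff_of_pos_right hh] at *
              exact hxi
          _ = r := by rw [hr]; ring
      · exact le_trans (hloc k _ hk' i) (by rw [hr]; linarith)
    rw [hS, Fintype.mem_piFinset]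
    intro i
    rw [Finset.mem_Icc]
    have := hcoord i
    rw [abs_le] at this
    constructor
    · exact Int.ceil_le.mpr (by linarith [this.1])
    · exact Int.le_floor.mpr (by linarith [this.2])
  -- rewrite tsums as finite sums
  have hts1 : (∑' k : Fin d → ℤ, w k * part d h φ k (Bh k x))
      = ∑ k ∈ S, w k * part d h φ k (Bh k x) := by
    refine tsum_eq_sum ?_
    intro k hk
    by_cases hz : part d h φ k (Bh k x) = 0
    · rw [hz, mul_zero]
    · exact absurd (hmemS k (Or.inl hz)) hk
  have hts2 : (∑' k : Fin d → ℤ, w k * part d h φ k (F.symm x))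
      = ∑ k ∈ S, w k * part d h φ k xh := by
    refine tsum_eq_sum ?_
    intro k hk
    by_cases hz : part d h φ k xh = 0
    · rw [← hxh, hz, mul_zero]
    · exact absurd (hmemS k (Or.inr hz)) hk
  -- per term bound
  have hterm : ∀ k ∈ S,
      |w k * part d h φ k (Bh k x) - w k * part d h φ k xh|
        ≤ cw * (Lφ : ℝ) * M * t := by
    intro k _
    by_cases hz : part d h φ k (Bh k x) = 0 ∧ part d h φ k xh = 0
    · rw [hz.1, hz.2, mul_zero, sub_self, abs_zero]
      positivity
    · have hk : part d h φ k (Bh k x) ≠ 0 ∨ part d h φ k xh ≠ 0 := by tauto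
      have hA := keyA k hk
      have hφd : |φ (fun i => Bh k x i / h - (k i : ℝ)) - φ (fun i => xh i / h - (k i : ℝ))|
          ≤ (Lφ : ℝ) * ((Λ : ℝ) * eF / h) := by
        have hd1 := hφ.dist_le_mul (fun i => Bh k x i / h - (k i : ℝ))
          (fun i => xh i / h - (k i : ℝ))
        rw [dist_eq_norm, dist_eq_norm] at hd1
        have heqv : (fun i => Bh k x i / h - (k i : ℝ)) - (fun i => xh i / h - (k i : ℝ))
            = h⁻¹ • (Bh k x - xh) := by
          funext i; simp only [Pi.sub_apply, Pi.smul_apply, smul_eq_mul]; ring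
        rw [heqv, norm_smul] at hd1
        simp only [Real.norm_eq_abs] at hd1
        rw [abs_inv, abs_of_pos hh] at hd1
        calc |φ (fun i => Bh k x i / h - (k i : ℝ)) - φ (fun i => xh i / h - (k i : ℝ))|
            ≤ (Lφ : ℝ) * (h⁻¹ * ‖Bh k x - xh‖) := hd1
          _ ≤ (Lφ : ℝ) * (h⁻¹ * ((Λ : ℝ) * eF)) := by
              refine mul_le_mul_of_nonneg_left ?_ (Lφ.coe_nonneg)
              exact mul_le_mul_of_nonneg_left hA (by positivity)
          _ = (Lφ : ℝ) * ((Λ : ℝ) * eF / h) := by ring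
      have hpart : |part d h φ k (Bh k x) - part d h φ k xh|
          ≤ (h ^ d)⁻¹ * ((Lφ : ℝ) * ((Λ : ℝ) * eF / h)) := by
        calc |part d h φ k (Bh k x) - part d h φ k xh|
            = (h ^ d)⁻¹ * |φ (fun i => Bh k x i / h - (k i : ℝ))
                - φ (fun i => xh i / h - (k i : ℝ))| := by
              rw [part, part, ← mul_sub, abs_mul, abs_inv, abs_pow, abs_of_pos hh]
          _ ≤ (h ^ d)⁻¹ * ((Lφ : ℝ) * ((Λ : ℝ) * eF / h)) :=
              mul_le_mul_of_nonneg_left hφd (by positivity)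
      calc |w k * part d h φ k (Bh k x) - w k * part d h φ k xh|
          = |w k| * |part d h φ k (Bh k x) - part d h φ k xh| := by
            rw [← mul_sub, abs_mul]
        _ ≤ (cw * h ^ d * M) * ((h ^ d)⁻¹ * ((Lφ : ℝ) * ((Λ : ℝ) * eF / h))) :=
            mul_le_mul (hw k) hpart (abs_nonneg _)
              (mul_nonneg (mul_nonneg hcw.le (by positivity)) hM0)
        _ = cw * (Lφ : ℝ) * M * t := by
            rw [ht]; field_simp
  -- cardinality bound
  have hcard : (S.card : ℝ) ≤ (2 * r + 1) ^ d := by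
    rw [hS, Fintype.card_piFinset]
    push_cast
    calc (∏ i : Fin d, ((Finset.Icc ⌈xh i / h - r⌉ ⌊xh i / h + r⌋).card : ℝ))
        ≤ ∏ i : Fin d, (2 * r + 1) := by
          refine Finset.prod_le_prod (fun i _ => by positivity) ?_
          intro i _
          rw [Int.card_Icc]
          rcases le_or_gt (⌊xh i / h + r⌋ + 1 - ⌈xh i / h - r⌉) 0 with hle | hlt
          · rw [Int.toNat_of_nonpos hle]; push_cast; linarith
          · have hz' : (((⌊xh i / h + r⌋ + 1 - ⌈xh i / h - r⌉).toNat : ℕ) : ℝ)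
                = ((⌊xh i / h + r⌋ : ℝ) + 1 - (⌈xh i / h - r⌉ : ℝ)) := by
              rw [← Int.cast_natCast, Int.toNat_of_nonneg hlt.le]; push_cast; ring
            rw [hz']
            have h1 : (⌊xh i / h + r⌋ : ℝ) ≤ xh i / h + r := Int.floor_le _
            have h2 : xh i / h - r ≤ (⌈xh i / h - r⌉ : ℝ) := Int.le_ceil _
            linarith
      _ = (2 * r + 1) ^ d := by
          rw [Finset.prod_const, Finset.card_univ, Fintype.card_fin]
  -- assemble
  rw [hts1, hts2]
  calc |(∑ k ∈ S, w k * part d h φ k (Bh k x)) - ∑ k ∈ S, w k * part d h φ k xh|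
      = |∑ k ∈ S, (w k * part d h φ k (Bh k x) - w k * part d h φ k xh)| := by
        rw [Finset.sum_sub_distrib]
    _ ≤ ∑ k ∈ S, |w k * part d h φ k (Bh k x) - w k * part d h φ k xh| :=
        Finset.abs_sum_le_sum_abs _ _
    _ ≤ S.card • (cw * (Lφ : ℝ) * M * t) := Finset.sum_le_card_nsmul _ _ _ hterm
    _ = (S.card : ℝ) * (cw * (Lφ : ℝ) * M * t) := by
        rw [nsmul_eq_mul]
    _ ≤ (2 * r + 1) ^ d * (cw * (Lφ : ℝ) * M * t) := by
        refine mul_le_mul_of_nonneg_right hcard (by positivity)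
    _ ≤ ((2 * ρ0 + 2) * (1 + t)) ^ d * (cw * ((Lφ : ℝ) + 1) * M * t) := by
        refine mul_le_mul ?_ ?_ (by positivity) (by positivity)
        · refine pow_le_pow_left₀ (by positivity) ?_ d
          nlinarith
        · nlinarith [mul_nonneg (mul_nonneg hcw.le hM0) ht0]
    _ = cw * ((Lφ : ℝ) + 1) * (2 * ρ0 + 2) ^ d * (1 + t) ^ d * t * M := by
        rw [mul_pow]; ring
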